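/- For every k ∈ (0, 1/2), the Bernoulli reparameterization f_k is continuous on ℝ, strictly increasing on ℝ, and satisfies 0 < f_k(θ) < 1 for all θ ∈ ℝ. -/

import Mathlib

lemma sig_strictMono (a c b : ℝ) (ha : 0 < a) (hc : 0 < c) :
    StrictMono (fun θ : ℝ => (1 + c * Real.exp (-θ / a + b))⁻¹) := by
  intro x y hxy
  have hey : (0:ℝ) < Real.exp (-y / a + b) := Real.exp_pos _
  have hex : (0:ℝ) < Real.exp (-x / a + b) := Real.exp_pos _
  have h2 : Real.exp (-y / a + b) < Real.exp (-x / a + b) := by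
    apply Real.exp_lt_exp.mpr
    have : -y / a < -x / a := by
      rw [div_lt_div_iff₀ ha ha]; nlinarith
    linarith
  have h1 : (0:ℝ) < 1 + c * Real.exp (-y / a + b) := by positivity
  simp only
  apply inv_strictAnti₀ h1
  nlinarith

lemma sig_pos (a c b θ : ℝ) (hc : 0 < c) :
    0 < (1 + c * Real.exp (-θ / a + b))⁻¹ := by positivity

lemma sig_lt_one (a c b θ : ℝ) (hc : 0 < c) :
    (1 + c * Real.exp (-θ / a + b))⁻¹ < 1 := by
  have := Real.exp_pos (-θ / a + b)
  apply inv_lt_one_of_one_lt₀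
  nlinarith

lemma sig_cont (a c b : ℝ) (hc : 0 < c) :
    Continuous (fun θ : ℝ => (1 + c * Real.exp (-θ / a + b))⁻¹) := by
  apply Continuous.inv₀
  · fun_prop
  · intro x
    have := Real.exp_pos (-x / a + b)
    positivity

theorem bernoulli_reparam_properties
    (k : ℝ) (hk0 : 0 < k) (hk1 : k < 1/2) :
    Continuous (fun θ : ℝ =>
      if θ ≤ k then
        (1 + ((1 - k) / k) * Real.exp (-θ / (k * (1 - k)) + 1 / (1 - k)))⁻¹
      else if θ ≤ 1 - k then θ
      else
        (1 + (k / (1 - k)) * Real.exp (-θ / (k * (1 - k)) + 1 / k))⁻¹) ∧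
    StrictMono (fun θ : ℝ =>
      if θ ≤ k then
        (1 + ((1 - k) / k) * Real.exp (-θ / (k * (1 - k)) + 1 / (1 - k)))⁻¹
      else if θ ≤ 1 - k then θ
      else
        (1 + (k / (1 - k)) * Real.exp (-θ / (k * (1 - k)) + 1 / k))⁻¹) ∧
    ∀ θ : ℝ,
      0 < (if θ ≤ k then
        (1 + ((1 - k) / k) * Real.exp (-θ / (k * (1 - k)) + 1 / (1 - k)))⁻¹
      else if θ ≤ 1 - k then θ
      else
        (1 + (k / (1 - k)) * Real.exp (-θ / (k * (1 - k)) + 1 / k))⁻¹) ∧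
      (if θ ≤ k then
        (1 + ((1 - k) / k) * Real.exp (-θ / (k * (1 - k)) + 1 / (1 - k)))⁻¹
      else if θ ≤ 1 - k then θ
      else
        (1 + (k / (1 - k)) * Real.exp (-θ / (k * (1 - k)) + 1 / k))⁻¹) < 1 := by
  have h1k : 0 < 1 - k := by linarith
  have hkk : k < 1 - k := by linarith
  have ha : 0 < k * (1 - k) := by positivity
  have hc1 : 0 < (1 - k) / k := by positivity
  have hc3 : 0 < k / (1 - k) := by positivity
  set g1 : ℝ → ℝ := fun θ =>
    (1 + ((1 - k) / k) * Real.exp (-θ / (k * (1 - k)) + 1 / (1 - k)))⁻¹ with hg1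
  set g3 : ℝ → ℝ := fun θ =>
    (1 + (k / (1 - k)) * Real.exp (-θ / (k * (1 - k)) + 1 / k))⁻¹ with hg3
  have hbd1 : g1 k = k := by
    have he : -k / (k * (1 - k)) + 1 / (1 - k) = 0 := by field_simp; ring
    simp only [hg1, he, Real.exp_zero, mul_one]
    rw [show 1 + (1 - k) / k = k⁻¹ by field_simp; ring, inv_inv]
  have hbd3 : g3 (1 - k) = 1 - k := by
    have he : -(1 - k) / (k * (1 - k)) + 1 / k = 0 := by field_simp; ring
    simp only [hg3, he, Real.exp_zero, mul_one]
    rw [show 1 + k / (1 - k) = (1 - k)⁻¹ by field_simp; ring, inv_inv]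
  have hm1 : StrictMono g1 := sig_strictMono _ _ _ ha hc1
  have hm3 : StrictMono g3 := sig_strictMono _ _ _ ha hc3
  refine ⟨?_, ?_, ?_⟩
  · apply Continuous.if_le (sig_cont _ _ _ hc1) _ continuous_id continuous_const
    · intro x hx
      simp only [id_eq] at hx
      subst hx
      rw [if_pos hkk.le]
      exact hbd1
    · apply Continuous.if_le continuous_id (sig_cont _ _ _ hc3) continuous_id
        continuous_const
      intro x hx
      simp only [id_eq] at hx
      subst hx
      exact hbd3.symm
  · intro x y hxy
    simp only
    by_cases hx : x ≤ k
    · by_cases hy : y ≤ k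
      · rw [if_pos hx, if_pos hy]; exact hm1 hxy
      · push_neg at hy
        have h1 : g1 x ≤ k := by
          rcases lt_or_eq_of_le hx with h | h
          · exact le_of_lt (hbd1 ▸ hm1 h)
          · rw [h, hbd1]
        rw [if_pos hx, if_neg (not_le.mpr hy)]
        by_cases hy2 : y ≤ 1 - k
        · rw [if_pos hy2]; linarith
        · push_neg at hy2
          rw [if_neg (not_le.mpr hy2)]
          have : g3 (1 - k) < g3 y := hm3 hy2
          rw [hbd3] at this
          linarith
    · push_neg at hx
      have hyk : ¬ y ≤ k := by push_neg; linarith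
      rw [if_neg (not_le.mpr hx), if_neg hyk]
      by_cases hx2 : x ≤ 1 - k
      · rw [if_pos hx2]
        by_cases hy2 : y ≤ 1 - k
        · rw [if_pos hy2]; exact hxy
        · push_neg at hy2
          rw [if_neg (not_le.mpr hy2)]
          have : g3 (1 - k) < g3 y := hm3 hy2
          rw [hbd3] at this
          linarith
      · push_neg at hx2
        have hy2 : ¬ y ≤ 1 - k := by push_neg; linarith
        rw [if_neg (not_le.mpr hx2), if_neg hy2]
        exact hm3 hxy
  · intro θ
    by_cases h1 : θ ≤ k
    · rw [if_pos h1]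
      exact ⟨sig_pos _ _ _ _ hc1, sig_lt_one _ _ _ _ hc1⟩
    · push_neg at h1
      rw [if_neg (not_le.mpr h1)]
      by_cases h2 : θ ≤ 1 - k
      · rw [if_pos h2]
        constructor <;> linarith
      · push_neg at h2
        rw [if_neg (not_le.mpr h2)]
        exact ⟨sig_pos _ _ _ _ hc3, sig_lt_one _ _ _ _ hc3⟩
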